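/- Let N ≥ 1 be an integer and let p, q, s, w be real numbers with p > 1, q > 1, s > 1, w > 1, q + w > N, and q ≠ N + s. Then there exists a constant C = C(N, p, q, s, w) such that for all real numbers 0 < λ < μ: ∫₀^∞ min((r/λ)^p, (λ/r)^q) · min((r/μ)^s, (μ/r)^w) · r^{N−1} dr ≤ C · max{ λ^q μ^{N−q}, λ^{N+s} μ^{−s} }. -/

import Mathlib

open MeasureTheory Set

private lemma rpow_integrableOn_Ioc_aux {a b e : ℝ} (hab : a ≤ b)
    (h : -1 < e ∨ 0 < a) :
    IntegrableOn (fun x : ℝ => x ^ e) (Set.Ioc a b) := by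
  rw [← Set.uIoc_of_le hab, ← intervalIntegrable_iff]
  rcases h with h | h
  · exact intervalIntegral.intervalIntegrable_rpow' h
  · refine intervalIntegral.intervalIntegrable_rpow (Or.inr ?_)
    rw [Set.uIcc_of_le hab]
    intro hx
    exact absurd hx.1 (by linarith)

private lemma rpow_integral_Ioc_aux {a b e : ℝ} (hab : a ≤ b)
    (h : -1 < e ∨ (e ≠ -1 ∧ 0 < a)) :
    ∫ x in Set.Ioc a b, x ^ e = (b ^ (e + 1) - a ^ (e + 1)) / (e + 1) := by
  rw [← intervalIntegral.integral_of_le hab]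
  refine integral_rpow ?_
  rcases h with h | ⟨h1, h2⟩
  · exact Or.inl h
  · refine Or.inr ⟨h1, ?_⟩
    rw [Set.uIcc_of_le hab]
    intro hx
    exact absurd hx.1 (by linarith)

private lemma aux_eq1 {r lam mu : ℝ} (hr : 0 < r) (hlam : 0 < lam) (hmu : 0 < mu)
    (a b c : ℝ) :
    (r / lam) ^ a * (r / mu) ^ b * r ^ c = lam ^ (-a) * mu ^ (-b) * r ^ (a + b + c) := by
  rw [Real.div_rpow hr.le hlam.le, Real.div_rpow hr.le hmu.le, Real.rpow_add hr,
    Real.rpow_add hr, Real.rpow_neg hlam.le, Real.rpow_neg hmu.le]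
  field_simp

private lemma aux_eq2 {r lam mu : ℝ} (hr : 0 < r) (hlam : 0 < lam) (hmu : 0 < mu)
    (a b c : ℝ) :
    (lam / r) ^ a * (r / mu) ^ b * r ^ c = lam ^ a * mu ^ (-b) * r ^ (b + c - a) := by
  rw [Real.div_rpow hlam.le hr.le, Real.div_rpow hr.le hmu.le, Real.rpow_sub hr,
    Real.rpow_add hr, Real.rpow_neg hmu.le]
  have h1 : (0:ℝ) < r ^ a := Real.rpow_pos_of_pos hr a
  have h2 : (0:ℝ) < mu ^ b := Real.rpow_pos_of_pos hmu b
  field_simp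

private lemma aux_eq3 {r lam mu : ℝ} (hr : 0 < r) (hlam : 0 < lam) (hmu : 0 < mu)
    (a b c : ℝ) :
    (lam / r) ^ a * (mu / r) ^ b * r ^ c = lam ^ a * mu ^ b * r ^ (c - a - b) := by
  rw [Real.div_rpow hlam.le hr.le, Real.div_rpow hmu.le hr.le, Real.rpow_sub hr,
    Real.rpow_sub hr]
  have h1 : (0:ℝ) < r ^ a := Real.rpow_pos_of_pos hr a
  have h2 : (0:ℝ) < r ^ b := Real.rpow_pos_of_pos hr b
  field_simp

/-- The basic convolution-type estimate for products of two bump profiles at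
different scales. -/
theorem min_min_integral_estimate
    (N : ℕ) (hN : 1 ≤ N) (p q s w : ℝ)
    (hp : 1 < p) (hq : 1 < q) (hs : 1 < s) (hw : 1 < w)
    (hqw : (N : ℝ) < q + w) (hq' : q ≠ (N : ℝ) + s) :
    ∃ C : ℝ, 0 < C ∧ ∀ lam mu : ℝ, 0 < lam → lam < mu →
      (∫ r in Set.Ioi (0 : ℝ),
          min ((r / lam) ^ p) ((lam / r) ^ q) *
            min ((r / mu) ^ s) ((mu / r) ^ w) * r ^ ((N : ℝ) - 1))
        ≤ C * max (lam ^ q * mu ^ ((N : ℝ) - q)) (lam ^ ((N : ℝ) + s) * mu ^ (-s)) := by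
  have hN0 : (0 : ℝ) < N := by exact_mod_cast Nat.pos_of_ne_zero (by omega)
  have hNq : (N : ℝ) + s - q ≠ 0 := fun h => hq' (by linarith)
  have hC1 : (0 : ℝ) < (N : ℝ) + p + s := by linarith
  have hC2 : (0 : ℝ) < |(N : ℝ) + s - q| := abs_pos.mpr hNq
  have hC3 : (0 : ℝ) < q + w - (N : ℝ) := by linarith
  refine ⟨1 / ((N : ℝ) + p + s) + 1 / |(N : ℝ) + s - q| + 1 / (q + w - (N : ℝ)),
    by positivity, ?_⟩
  intro lam mu hlam hlm
  have hmu : 0 < mu := hlam.trans hlm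
  set M := max (lam ^ q * mu ^ ((N : ℝ) - q)) (lam ^ ((N : ℝ) + s) * mu ^ (-s)) with hM
  have hM1 : lam ^ q * mu ^ ((N : ℝ) - q) ≤ M := le_max_left _ _
  have hM2 : lam ^ ((N : ℝ) + s) * mu ^ (-s) ≤ M := le_max_right _ _
  set f : ℝ → ℝ := fun r => min ((r / lam) ^ p) ((lam / r) ^ q) *
      min ((r / mu) ^ s) ((mu / r) ^ w) * r ^ ((N : ℝ) - 1) with hfdef
  have hfm : Measurable f := by rw [hfdef]; fun_prop
  have hfnn : ∀ r : ℝ, 0 < r → 0 ≤ f r := by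
    intro r hr
    have h1 : (0:ℝ) ≤ min ((r / lam) ^ p) ((lam / r) ^ q) :=
      le_min (Real.rpow_nonneg (by positivity) _) (Real.rpow_nonneg (by positivity) _)
    have h2 : (0:ℝ) ≤ min ((r / mu) ^ s) ((mu / r) ^ w) :=
      le_min (Real.rpow_nonneg (by positivity) _) (Real.rpow_nonneg (by positivity) _)
    exact mul_nonneg (mul_nonneg h1 h2) (Real.rpow_nonneg hr.le _)
  -- the three exponents
  set e1 : ℝ := p + s + ((N : ℝ) - 1) with he1
  set e2 : ℝ := s + ((N : ℝ) - 1) - q with he2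
  set e3 : ℝ := ((N : ℝ) - 1) - q - w with he3
  have he1' : (-1 : ℝ) < e1 := by rw [he1]; linarith
  have he2' : e2 ≠ -1 := by rw [he2]; intro h; exact hNq (by linarith)
  have he3' : e3 < -1 := by rw [he3]; linarith
  -- pointwise bounds
  have hb1 : ∀ r ∈ Set.Ioc (0:ℝ) lam, f r ≤ lam ^ (-p) * mu ^ (-s) * r ^ e1 := by
    intro r hr
    have hr0 : 0 < r := hr.1
    calc f r ≤ (r / lam) ^ p * (r / mu) ^ s * r ^ ((N : ℝ) - 1) := by
          refine mul_le_mul_of_nonneg_right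
            (mul_le_mul (min_le_left _ _) (min_le_left _ _)
              (le_min (Real.rpow_nonneg (by positivity) _)
                (Real.rpow_nonneg (by positivity) _))
              (Real.rpow_nonneg (by positivity) _)) (Real.rpow_nonneg hr0.le _)
      _ = lam ^ (-p) * mu ^ (-s) * r ^ e1 := by
          rw [he1]; exact aux_eq1 hr0 hlam hmu p s _
  have hb2 : ∀ r ∈ Set.Ioc lam mu, f r ≤ lam ^ q * mu ^ (-s) * r ^ e2 := by
    intro r hr
    have hr0 : 0 < r := hlam.trans hr.1
    calc f r ≤ (lam / r) ^ q * (r / mu) ^ s * r ^ ((N : ℝ) - 1) := by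
          refine mul_le_mul_of_nonneg_right
            (mul_le_mul (min_le_right _ _) (min_le_left _ _)
              (le_min (Real.rpow_nonneg (by positivity) _)
                (Real.rpow_nonneg (by positivity) _))
              (Real.rpow_nonneg (by positivity) _)) (Real.rpow_nonneg hr0.le _)
      _ = lam ^ q * mu ^ (-s) * r ^ e2 := by
          rw [he2]; exact aux_eq2 hr0 hlam hmu q s _
  have hb3 : ∀ r ∈ Set.Ioi mu, f r ≤ lam ^ q * mu ^ w * r ^ e3 := by
    intro r hr
    have hr0 : 0 < r := hmu.trans hr
    calc f r ≤ (lam / r) ^ q * (mu / r) ^ w * r ^ ((N : ℝ) - 1) := by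
          refine mul_le_mul_of_nonneg_right
            (mul_le_mul (min_le_right _ _) (min_le_right _ _)
              (le_min (Real.rpow_nonneg (by positivity) _)
                (Real.rpow_nonneg (by positivity) _))
              (Real.rpow_nonneg (by positivity) _)) (Real.rpow_nonneg hr0.le _)
      _ = lam ^ q * mu ^ w * r ^ e3 := by
          rw [he3]; exact aux_eq3 hr0 hlam hmu q w _
  -- integrability of the comparison functions
  have hg1i : IntegrableOn (fun r : ℝ => lam ^ (-p) * mu ^ (-s) * r ^ e1)
      (Set.Ioc (0:ℝ) lam) :=
    (rpow_integrableOn_Ioc_aux hlam.le (Or.inl he1')).const_mul _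
  have hg2i : IntegrableOn (fun r : ℝ => lam ^ q * mu ^ (-s) * r ^ e2)
      (Set.Ioc lam mu) :=
    (rpow_integrableOn_Ioc_aux hlm.le (Or.inr hlam)).const_mul _
  have hg3i : IntegrableOn (fun r : ℝ => lam ^ q * mu ^ w * r ^ e3) (Set.Ioi mu) :=
    (integrableOn_Ioi_rpow_of_lt he3' hmu).const_mul _
  -- integrability of f on the pieces
  have hf1 : IntegrableOn f (Set.Ioc (0:ℝ) lam) := by
    refine hg1i.mono' (hfm.aestronglyMeasurable.restrict) ?_
    filter_upwards [ae_restrict_mem measurableSet_Ioc] with r hr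
    rw [Real.norm_eq_abs, abs_of_nonneg (hfnn r hr.1)]
    exact hb1 r hr
  have hf2 : IntegrableOn f (Set.Ioc lam mu) := by
    refine hg2i.mono' (hfm.aestronglyMeasurable.restrict) ?_
    filter_upwards [ae_restrict_mem measurableSet_Ioc] with r hr
    rw [Real.norm_eq_abs, abs_of_nonneg (hfnn r (hlam.trans hr.1))]
    exact hb2 r hr
  have hf3 : IntegrableOn f (Set.Ioi mu) := by
    refine hg3i.mono' (hfm.aestronglyMeasurable.restrict) ?_
    filter_upwards [ae_restrict_mem measurableSet_Ioi] with r hr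
    rw [Real.norm_eq_abs, abs_of_nonneg (hfnn r (hmu.trans hr))]
    exact hb3 r hr
  -- split the integral
  have hsplit1 : Set.Ioc (0:ℝ) lam ∪ Set.Ioc lam mu = Set.Ioc 0 mu :=
    Set.Ioc_union_Ioc_eq_Ioc hlam.le hlm.le
  have hsplit2 : Set.Ioc (0:ℝ) mu ∪ Set.Ioi mu = Set.Ioi 0 :=
    Set.Ioc_union_Ioi_eq_Ioi hmu.le
  have hdisj1 : Disjoint (Set.Ioc (0:ℝ) lam) (Set.Ioc lam mu) := by
    rw [Set.disjoint_left]
    rintro x hx1 hx2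
    exact absurd hx1.2 (not_le.mpr hx2.1)
  have hdisj2 : Disjoint (Set.Ioc (0:ℝ) mu) (Set.Ioi mu) := by
    rw [Set.disjoint_left]
    rintro x hx1 hx2
    exact absurd hx1.2 (not_le.mpr hx2)
  have hf12 : IntegrableOn f (Set.Ioc (0:ℝ) mu) := by
    rw [← hsplit1]; exact hf1.union hf2
  have hI : (∫ r in Set.Ioi (0:ℝ), f r)
      = (∫ r in Set.Ioc (0:ℝ) lam, f r) + (∫ r in Set.Ioc lam mu, f r)
        + (∫ r in Set.Ioi mu, f r) := by
    rw [← hsplit2, setIntegral_union hdisj2 measurableSet_Ioi hf12 hf3, ← hsplit1,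
      setIntegral_union hdisj1 measurableSet_Ioc hf1 hf2]
  -- evaluate / bound the three pieces
  have hP1 : (∫ r in Set.Ioc (0:ℝ) lam, f r)
      ≤ 1 / ((N : ℝ) + p + s) * (lam ^ ((N : ℝ) + s) * mu ^ (-s)) := by
    have h1 : (∫ r in Set.Ioc (0:ℝ) lam, f r)
        ≤ ∫ r in Set.Ioc (0:ℝ) lam, lam ^ (-p) * mu ^ (-s) * r ^ e1 :=
      setIntegral_mono_on hf1 hg1i measurableSet_Ioc hb1
    have h2 : (∫ r in Set.Ioc (0:ℝ) lam, lam ^ (-p) * mu ^ (-s) * r ^ e1)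
        = lam ^ (-p) * mu ^ (-s) * ((lam ^ (e1+1) - (0:ℝ) ^ (e1+1)) / (e1+1)) := by
      rw [integral_const_mul, rpow_integral_Ioc_aux hlam.le (Or.inl he1')]
    have h0 : (0:ℝ) ^ (e1+1) = 0 := Real.zero_rpow (by rw [he1]; intro h; linarith)
    have h3 : lam ^ (-p) * lam ^ (e1+1) = lam ^ ((N : ℝ) + s) := by
      rw [← Real.rpow_add hlam]
      congr 1
      rw [he1]; ring
    calc (∫ r in Set.Ioc (0:ℝ) lam, f r)
        ≤ lam ^ (-p) * mu ^ (-s) * ((lam ^ (e1+1) - (0:ℝ) ^ (e1+1)) / (e1+1)) :=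
          h1.trans h2.le
      _ = 1 / ((N : ℝ) + p + s) * (lam ^ ((N : ℝ) + s) * mu ^ (-s)) := by
          rw [h0, show e1 + 1 = (N : ℝ) + p + s by rw [he1]; ring, ← h3]
          rw [show e1 + 1 = (N : ℝ) + p + s by rw [he1]; ring]; ring
  have hP3 : (∫ r in Set.Ioi mu, f r)
      ≤ 1 / (q + w - (N : ℝ)) * (lam ^ q * mu ^ ((N : ℝ) - q)) := by
    have h1 : (∫ r in Set.Ioi mu, f r)
        ≤ ∫ r in Set.Ioi mu, lam ^ q * mu ^ w * r ^ e3 :=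
      setIntegral_mono_on hf3 hg3i measurableSet_Ioi hb3
    have h2 : (∫ r in Set.Ioi mu, lam ^ q * mu ^ w * r ^ e3)
        = lam ^ q * mu ^ w * (-mu ^ (e3+1) / (e3+1)) := by
      rw [integral_const_mul, integral_Ioi_rpow_of_lt he3' hmu]
    have h3 : mu ^ w * mu ^ (e3+1) = mu ^ ((N : ℝ) - q) := by
      rw [← Real.rpow_add hmu]
      congr 1
      rw [he3]; ring
    calc (∫ r in Set.Ioi mu, f r)
        ≤ lam ^ q * mu ^ w * (-mu ^ (e3+1) / (e3+1)) := h1.trans h2.le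
      _ = -1 / (e3+1) * (lam ^ q * (mu ^ w * mu ^ (e3+1))) := by ring
      _ = 1 / (q + w - (N : ℝ)) * (lam ^ q * (mu ^ w * mu ^ (e3+1))) := by
          rw [show e3 + 1 = -(q + w - (N : ℝ)) by rw [he3]; ring, div_neg, neg_div, neg_neg]
      _ = 1 / (q + w - (N : ℝ)) * (lam ^ q * mu ^ ((N : ℝ) - q)) := by rw [h3]
  have hP2 : (∫ r in Set.Ioc lam mu, f r) ≤ 1 / |(N : ℝ) + s - q| * M := by
    have h1 : (∫ r in Set.Ioc lam mu, f r)
        ≤ ∫ r in Set.Ioc lam mu, lam ^ q * mu ^ (-s) * r ^ e2 :=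
      setIntegral_mono_on hf2 hg2i measurableSet_Ioc hb2
    have h2 : (∫ r in Set.Ioc lam mu, lam ^ q * mu ^ (-s) * r ^ e2)
        = lam ^ q * mu ^ (-s) * ((mu ^ (e2+1) - lam ^ (e2+1)) / (e2+1)) := by
      rw [integral_const_mul, rpow_integral_Ioc_aux hlm.le (Or.inr ⟨he2', hlam⟩)]
    have he2eq : e2 + 1 = (N : ℝ) + s - q := by rw [he2]; ring
    have hlamq : (0:ℝ) ≤ lam ^ q * mu ^ (-s) := by positivity
    rcases lt_or_gt_of_ne hNq with hneg | hpos
    · -- N + s - q < 0 : bound by the lam ^ (e2+1) term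
      have hlt : e2 + 1 < 0 := by rw [he2eq]; linarith
      have habs : |(N : ℝ) + s - q| = -(e2 + 1) := by
        rw [he2eq, abs_of_neg (by linarith : (N : ℝ) + s - q < 0)]
      have hkey : (mu ^ (e2+1) - lam ^ (e2+1)) / (e2+1) ≤ lam ^ (e2+1) / (-(e2+1)) := by
        have heq : (mu ^ (e2+1) - lam ^ (e2+1)) / (e2+1)
            = (lam ^ (e2+1) - mu ^ (e2+1)) / (-(e2+1)) := by
          rw [div_neg, ← neg_div, neg_sub]
        rw [heq]
        refine div_le_div_of_nonneg_right ?_ (by linarith)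
        have : (0:ℝ) ≤ mu ^ (e2+1) := Real.rpow_nonneg hmu.le _
        linarith
      have h4 : lam ^ q * lam ^ (e2+1) = lam ^ ((N : ℝ) + s) := by
        rw [← Real.rpow_add hlam]
        congr 1
        rw [he2eq]; ring
      calc (∫ r in Set.Ioc lam mu, f r)
          ≤ lam ^ q * mu ^ (-s) * ((mu ^ (e2+1) - lam ^ (e2+1)) / (e2+1)) :=
            h1.trans h2.le
        _ ≤ lam ^ q * mu ^ (-s) * (lam ^ (e2+1) / (-(e2+1))) :=
            mul_le_mul_of_nonneg_left hkey hlamq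
        _ = 1 / |(N : ℝ) + s - q| * (lam ^ ((N : ℝ) + s) * mu ^ (-s)) := by
            rw [habs, ← h4]; ring
        _ ≤ 1 / |(N : ℝ) + s - q| * M := by
            exact mul_le_mul_of_nonneg_left hM2 (by positivity)
    · -- N + s - q > 0 : bound by the mu ^ (e2+1) term
      have hgt : 0 < e2 + 1 := by rw [he2eq]; linarith
      have habs : |(N : ℝ) + s - q| = e2 + 1 := by
        rw [he2eq, abs_of_pos (by linarith : (0:ℝ) < (N : ℝ) + s - q)]
      have hkey : (mu ^ (e2+1) - lam ^ (e2+1)) / (e2+1) ≤ mu ^ (e2+1) / (e2+1) := by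
        refine div_le_div_of_nonneg_right ?_ hgt.le
        have : (0:ℝ) ≤ lam ^ (e2+1) := Real.rpow_nonneg hlam.le _
        linarith
      have h4 : mu ^ (-s) * mu ^ (e2+1) = mu ^ ((N : ℝ) - q) := by
        rw [← Real.rpow_add hmu]
        congr 1
        rw [he2eq]; ring
      calc (∫ r in Set.Ioc lam mu, f r)
          ≤ lam ^ q * mu ^ (-s) * ((mu ^ (e2+1) - lam ^ (e2+1)) / (e2+1)) :=
            h1.trans h2.le
        _ ≤ lam ^ q * mu ^ (-s) * (mu ^ (e2+1) / (e2+1)) :=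
            mul_le_mul_of_nonneg_left hkey hlamq
        _ = 1 / |(N : ℝ) + s - q| * (lam ^ q * (mu ^ (-s) * mu ^ (e2+1))) := by
            rw [habs]; ring
        _ = 1 / |(N : ℝ) + s - q| * (lam ^ q * mu ^ ((N : ℝ) - q)) := by rw [h4]
        _ ≤ 1 / |(N : ℝ) + s - q| * M := by
            exact mul_le_mul_of_nonneg_left hM1 (by positivity)
  -- put everything together
  have hfin1 : 1 / ((N : ℝ) + p + s) * (lam ^ ((N : ℝ) + s) * mu ^ (-s))
      ≤ 1 / ((N : ℝ) + p + s) * M := mul_le_mul_of_nonneg_left hM2 (by positivity)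
  have hfin3 : 1 / (q + w - (N : ℝ)) * (lam ^ q * mu ^ ((N : ℝ) - q))
      ≤ 1 / (q + w - (N : ℝ)) * M := mul_le_mul_of_nonneg_left hM1 (by positivity)
  calc (∫ r in Set.Ioi (0:ℝ), f r)
      = (∫ r in Set.Ioc (0:ℝ) lam, f r) + (∫ r in Set.Ioc lam mu, f r)
        + (∫ r in Set.Ioi mu, f r) := hI
    _ ≤ 1 / ((N : ℝ) + p + s) * M + 1 / |(N : ℝ) + s - q| * M
        + 1 / (q + w - (N : ℝ)) * M :=
          add_le_add (add_le_add (hP1.trans hfin1) hP2) (hP3.trans hfin3)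
    _ = (1 / ((N : ℝ) + p + s) + 1 / |(N : ℝ) + s - q| + 1 / (q + w - (N : ℝ))) * M := by
          ring
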